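/- arXiv:1506.05380 — 2 statements merged into one kernel-verified Lean document; each statement's English description precedes it below -/
import Mathlib

section
/- Let F/F_q be a function field with full constant field F_q, S ⊊ ℙ_F a nonempty set of places, H = ⋂_{P∈S} O_P the holomorphy ring, d ≥ 2, and Q_1, ..., Q_t distinct places in S. Then the density (Moore–Smith limit over positive divisors D supported outside S of |· ∩ L(D)^d| / q^{dℓ(D)}) of the set of monic degree-d coefficient tuples in H^d that are NOT Eisenstein at any of Q_1, ..., Q_t equals ∏_{i=1}^t (1 − (q^{deg(Q_i)} − 1)/q^{(d+1)deg(Q_i)}). -/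
/-- A model of an algebraic function field of one variable with full (finite) constant field
of cardinality `q`: a field `F`, a subfield `Fq` of constants with `q` elements, a family of
normalized discrete valuations (the places), degrees of places, the genus, and the dimension
`ℓ(D)` of the Riemann–Roch space of a divisor, together with the standard facts about these
data (Riemann's theorem, `ℓ(D) ≤ deg D + 1`, `|L(D)| = q^{ℓ(D)}`, finiteness of zeros and
poles, and the zeta-function bound on the number of places of given degree). -/
structure FnField (q : ℕ) where
  /-- the function field -/
  F : Type
  [instField : Field F]
  /-- the field of constants -/
  Fq : Subfield F
  card_Fq : Nat.card Fq = q
  two_le_q : 2 ≤ q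
  /-- the places -/
  Place : Type
  /-- the normalized additive valuation at each place (with junk value `0` at `0`) -/
  v : Place → F → ℤ
  v_zero : ∀ P, v P 0 = 0
  v_mul : ∀ P (x y : F), x ≠ 0 → y ≠ 0 → v P (x * y) = v P x + v P y
  v_add : ∀ P (x y : F), x + y ≠ 0 → min (v P x) (v P y) ≤ v P (x + y)
  v_surj : ∀ P, ∃ x : F, x ≠ 0 ∧ v P x = 1
  v_const : ∀ P (c : Fq), (c : F) ≠ 0 → v P (c : F) = 0
  /-- a nonzero function has finitely many zeros and poles -/
  finite_supp : ∀ x : F, x ≠ 0 → {P : Place | v P x ≠ 0}.Finite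
  /-- `Fq` is the full constant field -/
  full_const : ∀ x : F, x ≠ 0 → (∀ P, v P x = 0) → x ∈ Fq
  /-- the degree of a place -/
  deg : Place → ℕ
  deg_pos : ∀ P, 0 < deg P
  /-- the genus -/
  genus : ℕ
  /-- the dimension `ℓ(D)` of the Riemann–Roch space `L(D)` over `Fq` -/
  ell : (Place →₀ ℤ) → ℕ
  /-- `L(D) = {f : v_P(f) ≥ -D(P) ∀P}` has exactly `q ^ ℓ(D)` elements -/
  card_RR : ∀ D : Place →₀ ℤ,
    Nat.card {f : F // f = 0 ∨ ∀ P, -(D P) ≤ v P f} = q ^ ell D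
  /-- Riemann's theorem: `ℓ(D) = deg D + 1 - g` once `deg D ≥ 2g - 1` -/
  riemann : ∀ D : Place →₀ ℤ,
    2 * (genus : ℤ) - 1 ≤ D.sum (fun P n => n * (deg P : ℤ)) →
    (ell D : ℤ) = D.sum (fun P n => n * (deg P : ℤ)) + 1 - genus
  /-- `ℓ(D) ≤ deg D + 1` for divisors of nonnegative degree -/
  ell_le : ∀ D : Place →₀ ℤ, 0 ≤ D.sum (fun P n => n * (deg P : ℤ)) →
    (ell D : ℤ) ≤ D.sum (fun P n => n * (deg P : ℤ)) + 1
  /-- the number of places of degree `n` is `O(q^n / n)` -/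
  places_bound : ∃ c : ℝ, ∀ n : ℕ, 0 < n →
    (Nat.card {P : Place // deg P = n} : ℝ) ≤ c * q ^ n / n

namespace FnField

variable {q : ℕ} (X : FnField q)

instance : Field X.F := X.instField

/-- the degree of a divisor -/
def degDiv (D : X.Place →₀ ℤ) : ℤ := D.sum fun P n => n * (X.deg P : ℤ)

/-- the Riemann–Roch space `L(D)` of a divisor `D` -/
def RR (D : X.Place →₀ ℤ) : Set X.F := {f | f = 0 ∨ ∀ P, -(D P) ≤ X.v P f}

/-- membership in (the maximal ideal of the holomorphy ring corresponding to) a place: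
`x ∈ P` iff `v_P(x) ≥ 1`. -/
def mem1 (P : X.Place) (x : X.F) : Prop := x = 0 ∨ 1 ≤ X.v P x

/-- membership in the square of (the maximal ideal corresponding to) a place:
`x ∈ P²` iff `v_P(x) ≥ 2`. -/
def mem2 (P : X.Place) (x : X.F) : Prop := x = 0 ∨ 2 ≤ X.v P x

/-- the holomorphy ring `H = ⋂_{P ∈ S} O_P` of a set of places `S` -/
def Hring (S : Set X.Place) : Set X.F := {x | ∀ P ∈ S, x = 0 ∨ 0 ≤ X.v P x}

/-- the directed set of positive divisors with support outside `S` -/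
def Divisors (S : Set X.Place) : Type :=
  {D : X.Place →₀ ℤ // 0 ≤ D ∧ ∀ P ∈ D.support, P ∉ S}

noncomputable instance (S : Set X.Place) : Preorder (X.Divisors S) :=
  Subtype.preorder _

end FnField

open FnField Filter

section Aux
open Finset
variable {q : ℕ} (X : FnField q)

lemma aux_degDiv_zero : X.degDiv 0 = 0 := Finsupp.sum_zero_index

lemma aux_degDiv_add (A B : X.Place →₀ ℤ) :
    X.degDiv (A + B) = X.degDiv A + X.degDiv B :=
  Finsupp.sum_add_index' (fun _ => zero_mul _) (fun _ b₁ b₂ => add_mul b₁ b₂ _)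

lemma aux_degDiv_sub (A B : X.Place →₀ ℤ) :
    X.degDiv (A - B) = X.degDiv A - X.degDiv B :=
  Finsupp.sum_sub_index (fun _ b₁ b₂ => sub_mul b₁ b₂ _)

lemma aux_degDiv_single (P : X.Place) (n : ℤ) :
    X.degDiv (Finsupp.single P n) = n * X.deg P :=
  Finsupp.sum_single_index (zero_mul _)

lemma aux_degDiv_sum {ι : Type} (s : Finset ι) (f : ι → (X.Place →₀ ℤ)) :
    X.degDiv (∑ i ∈ s, f i) = ∑ i ∈ s, X.degDiv (f i) := by
  classical
  induction s using Finset.induction_on with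
  | empty => simp [aux_degDiv_zero]
  | insert _ _ hns ih => rw [Finset.sum_insert hns, aux_degDiv_add, ih, Finset.sum_insert hns]

lemma aux_degDiv_nonneg (D : X.Place →₀ ℤ) (hD : 0 ≤ D) : 0 ≤ X.degDiv D := by
  have h : X.degDiv D = ∑ P ∈ D.support, D P * X.deg P := rfl
  rw [h]
  refine Finset.sum_nonneg fun P _ => mul_nonneg ?_ (by positivity)
  exact (Finsupp.le_def.mp hD) P

end Aux

section Aux2
open Finset
variable {q : ℕ} (X : FnField q)

lemma aux_cardA {t : ℕ} (Q : Fin t → X.Place) (hQinj : Function.Injective Q)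
    (D : X.Place →₀ ℤ) (hDQ : ∀ j, D (Q j) = 0) (m : Fin t → ℕ) :
    Nat.card {f : X.F // f ∈ X.RR D ∧ ∀ j, (f = 0 ∨ (m j : ℤ) ≤ X.v (Q j) f)}
      = q ^ X.ell (D - ∑ j, Finsupp.single (Q j) ((m j : ℤ))) := by
  classical
  set E := ∑ j, Finsupp.single (Q j) ((m j : ℤ)) with hE
  have hEapp : ∀ P, E P = ∑ j, if Q j = P then (m j : ℤ) else 0 := by
    intro P; rw [hE, Finsupp.finset_sum_apply]
    exact Finset.sum_congr rfl fun j _ => Finsupp.single_apply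
  have hEQ : ∀ j, E (Q j) = (m j : ℤ) := by
    intro j; rw [hEapp]
    rw [Finset.sum_eq_single j (fun b _ hb => if_neg (fun hc => hb (hQinj hc)))
      (fun hj => absurd (Finset.mem_univ j) hj)]
    exact if_pos rfl
  have hEnn : ∀ P, 0 ≤ E P := by
    intro P; rw [hEapp]
    refine Finset.sum_nonneg fun j _ => ?_
    split <;> positivity
  have hEout : ∀ P, (∀ j, Q j ≠ P) → E P = 0 := by
    intro P h; rw [hEapp]
    exact Finset.sum_eq_zero fun j _ => if_neg (h j)
  rw [← X.card_RR (D - E)]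
  refine Nat.card_congr (Equiv.subtypeEquivRight ?_)
  intro f
  by_cases hf : f = 0
  · simp [hf, RR]
  · simp only [RR, Set.mem_setOf_eq, hf, false_or, Finsupp.sub_apply]
    constructor
    · rintro ⟨h1, h2⟩ P
      by_cases hP : ∃ j, Q j = P
      · obtain ⟨j, rfl⟩ := hP
        have h3 := h2 j
        rw [hDQ j, hEQ j]
        omega
      · push_neg at hP
        rw [hEout P hP]
        have := h1 P
        omega
    · intro h
      constructor
      · intro P
        have h1 := h P
        have h2 := hEnn P
        omega
      · intro j
        have h1 := h (Q j)
        rw [hDQ j, hEQ j] at h1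
        omega

lemma aux_ellA {t : ℕ} (Q : Fin t → X.Place) (D : X.Place →₀ ℤ)
    (m : Fin t → ℕ) (hm : ∀ j, m j ≤ 2)
    (hbig : 2 * (X.genus : ℤ) - 1 + 2 * ∑ j, (X.deg (Q j) : ℤ) ≤ X.degDiv D) :
    (X.ell (D - ∑ j, Finsupp.single (Q j) ((m j : ℤ))) : ℤ)
      = (X.ell D : ℤ) - ∑ j, (m j : ℤ) * X.deg (Q j) := by
  classical
  set E := ∑ j, Finsupp.single (Q j) ((m j : ℤ)) with hE
  have hdd : ∀ A : X.Place →₀ ℤ, X.degDiv A = A.sum fun P n => n * (X.deg P : ℤ) := fun _ => rfl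
  have hdegE : X.degDiv E = ∑ j, (m j : ℤ) * X.deg (Q j) := by
    rw [hE, aux_degDiv_sum]
    exact Finset.sum_congr rfl fun j _ => aux_degDiv_single X _ _
  have hEnn : 0 ≤ X.degDiv E := by
    rw [hdegE]
    exact Finset.sum_nonneg fun j _ => by positivity
  have hEle : X.degDiv E ≤ 2 * ∑ j, (X.deg (Q j) : ℤ) := by
    rw [hdegE, Finset.mul_sum]
    refine Finset.sum_le_sum fun j _ => ?_
    have h1 : (m j : ℤ) ≤ 2 := by exact_mod_cast hm j
    have h2 : (0 : ℤ) ≤ X.deg (Q j) := by positivity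
    nlinarith
  have hsnn : 0 ≤ 2 * ∑ j, (X.deg (Q j) : ℤ) := by
    have := hEnn
    have := hEle
    positivity
  have r1 := X.riemann D (by rw [← hdd]; linarith)
  have r2 := X.riemann (D - E) (by rw [← hdd, aux_degDiv_sub]; linarith)
  rw [← hdd] at r1 r2
  rw [aux_degDiv_sub] at r2
  rw [← hdegE]
  linarith

lemma aux_cardPi {d : ℕ} (C : Fin d → X.F → Prop) :
    Nat.card {h : Fin d → X.F // ∀ i, C i (h i)} = ∏ i, Nat.card {f : X.F // C i f} :=
  (Nat.card_congr (Equiv.subtypePiEquivPi)).trans Nat.card_pi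

lemma aux_cardRect {d t : ℕ} (Q : Fin t → X.Place) (hQinj : Function.Injective Q)
    (D : X.Place →₀ ℤ) (hDQ : ∀ j, D (Q j) = 0)
    (hbig : 2 * (X.genus : ℤ) - 1 + 2 * ∑ j, (X.deg (Q j) : ℤ) ≤ X.degDiv D)
    (m : Fin t → Fin d → ℕ) (hm : ∀ j i, m j i ≤ 2) :
    (Nat.card {h : Fin d → X.F //
        ∀ i, (h i ∈ X.RR D ∧ ∀ j, (h i = 0 ∨ (m j i : ℤ) ≤ X.v (Q j) (h i)))} : ℝ)
      = (q : ℝ) ^ (d * X.ell D) * ∏ j, (((q : ℝ) ^ X.deg (Q j)) ^ (∑ i, m j i))⁻¹ := by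
  classical
  have hq2 := X.two_le_q
  have hq0 : (q : ℝ) ≠ 0 := by
    have : (2 : ℝ) ≤ (q : ℝ) := by exact_mod_cast hq2
    linarith
  have hcard : ∀ i : Fin d,
      Nat.card {f : X.F // f ∈ X.RR D ∧ ∀ j, (f = 0 ∨ (m j i : ℤ) ≤ X.v (Q j) f)}
        = q ^ X.ell (D - ∑ j, Finsupp.single (Q j) ((m j i : ℤ))) :=
    fun i => aux_cardA X Q hQinj D hDQ (fun j => m j i)
  have hell : ∀ i : Fin d,
      X.ell (D - ∑ j, Finsupp.single (Q j) ((m j i : ℤ))) + ∑ j, m j i * X.deg (Q j)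
        = X.ell D := by
    intro i
    have h1 : (X.ell (D - ∑ j, Finsupp.single (Q j) ((m j i : ℤ))) : ℤ)
        = (X.ell D : ℤ) - ∑ j, (m j i : ℤ) * X.deg (Q j) :=
      aux_ellA X Q D (fun j => m j i) (fun j => hm j i) hbig
    have h2 : ((∑ j, m j i * X.deg (Q j) : ℕ) : ℤ) = ∑ j, (m j i : ℤ) * X.deg (Q j) := by
      push_cast; rfl
    omega
  rw [aux_cardPi X (fun i f => f ∈ X.RR D ∧ ∀ j, (f = 0 ∨ (m j i : ℤ) ≤ X.v (Q j) f)),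
    Nat.cast_prod]
  have hfac : ∀ i : Fin d,
      ((Nat.card {f : X.F // f ∈ X.RR D ∧ ∀ j, (f = 0 ∨ (m j i : ℤ) ≤ X.v (Q j) f)} : ℕ) : ℝ)
        = (q : ℝ) ^ (X.ell D) * ∏ j, (((q : ℝ) ^ X.deg (Q j)) ^ (m j i))⁻¹ := by
    intro i
    rw [hcard i]
    have hone : ((q : ℝ)) ^ (X.ell D)
        = (q : ℝ) ^ (X.ell (D - ∑ j, Finsupp.single (Q j) ((m j i : ℤ))))
          * ∏ j, ((q : ℝ) ^ X.deg (Q j)) ^ (m j i) := by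
      rw [← hell i, pow_add]
      congr 1
      rw [← Finset.prod_pow_eq_pow_sum]
      exact Finset.prod_congr rfl fun j _ => by rw [mul_comm (m j i), pow_mul]
    rw [hone, mul_assoc, ← Finset.prod_mul_distrib]
    have : ∀ j : Fin t, ((q : ℝ) ^ X.deg (Q j)) ^ (m j i)
        * (((q : ℝ) ^ X.deg (Q j)) ^ (m j i))⁻¹ = 1 := by
      intro j
      exact mul_inv_cancel₀ (by positivity)
    push_cast
    rw [Finset.prod_congr rfl fun j _ => this j, Finset.prod_const_one, mul_one]
  rw [Finset.prod_congr rfl fun i _ => hfac i, Finset.prod_mul_distrib, Finset.prod_const,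
    Finset.card_univ, Fintype.card_fin, ← pow_mul, mul_comm (X.ell D) d, Finset.prod_comm]
  congr 1
  refine Finset.prod_congr rfl fun j _ => ?_
  rw [← Finset.prod_pow_eq_pow_sum, Finset.prod_inv_distrib]

end Aux2

section Aux3
open Finset
variable {q : ℕ} (X : FnField q)

def ApD {d t : ℕ} (Q : Fin t → X.Place) (j : Fin t) (h : Fin d → X.F) : Prop :=
  ∀ i, X.mem1 (Q j) (h i)

def BpD {d t : ℕ} (hd0 : 0 < d) (Q : Fin t → X.Place) (j : Fin t) (h : Fin d → X.F) : Prop :=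
  (∀ i, X.mem1 (Q j) (h i)) ∧ X.mem2 (Q j) (h ⟨0, hd0⟩)

def PKD {d t : ℕ} (hd0 : 0 < d) (Q : Fin t → X.Place) (j : Fin t) (k : Fin 3)
    (h : Fin d → X.F) : Prop :=
  match k with
  | ⟨0, _⟩ => True
  | ⟨1, _⟩ => ApD X Q j h
  | ⟨2, _⟩ => BpD X hd0 Q j h

def MD (d : ℕ) (hd0 : 0 < d) (k : Fin 3) (i : Fin d) : ℕ :=
  match k with
  | ⟨0, _⟩ => 0
  | ⟨1, _⟩ => 1
  | ⟨2, _⟩ => if i = ⟨0, hd0⟩ then 2 else 1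

def WD : Fin 3 → ℝ
  | ⟨0, _⟩ => 1
  | ⟨1, _⟩ => -1
  | ⟨2, _⟩ => 1

def CD (d : ℕ) : Fin 3 → ℕ
  | ⟨0, _⟩ => 0
  | ⟨1, _⟩ => d
  | ⟨2, _⟩ => d + 1

variable {d t : ℕ} (hd0 : 0 < d) (Q : Fin t → X.Place)

lemma PKD_zero (j : Fin t) (h : Fin d → X.F) : PKD X hd0 Q j 0 h = True := rfl
lemma PKD_one (j : Fin t) (h : Fin d → X.F) : PKD X hd0 Q j 1 h = ApD X Q j h := rfl
lemma PKD_two (j : Fin t) (h : Fin d → X.F) : PKD X hd0 Q j 2 h = BpD X hd0 Q j h := rfl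
lemma MD_zero (i : Fin d) : MD d hd0 0 i = 0 := rfl
lemma MD_one (i : Fin d) : MD d hd0 1 i = 1 := rfl
lemma MD_two (i : Fin d) : MD d hd0 2 i = if i = ⟨0, hd0⟩ then 2 else 1 := rfl
lemma WD_zero : WD 0 = 1 := rfl
lemma WD_one : WD 1 = -1 := rfl
lemma WD_two : WD 2 = 1 := rfl
lemma CD_zero : CD d 0 = 0 := rfl
lemma CD_one : CD d 1 = d := rfl
lemma CD_two : CD d 2 = d + 1 := rfl

lemma MD_le (k : Fin 3) (i : Fin d) : MD d hd0 k i ≤ 2 := by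
  have fin3 : k = 0 ∨ k = 1 ∨ k = 2 := by omega
  rcases fin3 with rfl | rfl | rfl
  · rw [MD_zero]; omega
  · rw [MD_one]; omega
  · rw [MD_two]; split <;> omega

lemma MD_sum (k : Fin 3) : ∑ i, MD d hd0 k i = CD d k := by
  have fin3 : k = 0 ∨ k = 1 ∨ k = 2 := by omega
  rcases fin3 with rfl | rfl | rfl
  · simp [MD_zero, CD_zero]
  · simp [MD_one, CD_one]
  · rw [CD_two]
    have h1 : ∀ i : Fin d, MD d hd0 2 i = 1 + (if i = (⟨0, hd0⟩ : Fin d) then 1 else 0) := by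
      intro i; rw [MD_two]; split <;> rfl
    rw [Finset.sum_congr rfl fun i _ => h1 i, Finset.sum_add_distrib,
      Finset.sum_ite_eq' univ (⟨0, hd0⟩ : Fin d) (fun _ => 1)]
    simp

lemma aux_rect_iff (D : X.Place →₀ ℤ) (hDQ : ∀ j, D (Q j) = 0) (σ : Fin t → Fin 3)
    (h : Fin d → X.F) :
    ((∀ j, PKD X hd0 Q j (σ j) h) ∧ ∀ i, h i ∈ X.RR D)
      ↔ ∀ i, (h i ∈ X.RR D ∧
          ∀ j, (h i = 0 ∨ ((MD d hd0 (σ j) i : ℕ) : ℤ) ≤ X.v (Q j) (h i))) := by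
  have hRR0 : ∀ f : X.F, f ∈ X.RR D → ∀ j : Fin t, f = 0 ∨ (0 : ℤ) ≤ X.v (Q j) f := by
    intro f hf j
    refine hf.imp id fun hh => ?_
    have h1 := hh (Q j); rw [hDQ j] at h1; simpa using h1
  have fin3 : ∀ k : Fin 3, k = 0 ∨ k = 1 ∨ k = 2 := by omega
  constructor
  · rintro ⟨hP, hm⟩ i
    refine ⟨hm i, fun j => ?_⟩
    have hPj := hP j
    rcases fin3 (σ j) with hk | hk | hk <;> rw [hk] at hPj ⊢
    · rw [MD_zero]
      simpa using hRR0 (h i) (hm i) j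
    · rw [PKD_one] at hPj
      rw [MD_one]
      simpa [mem1] using hPj i
    · rw [PKD_two] at hPj
      rcases hPj with ⟨hA, h2⟩
      rw [MD_two]
      by_cases hi : i = (⟨0, hd0⟩ : Fin d)
      · subst hi
        simpa [mem2] using h2
      · rw [if_neg hi]
        simpa [mem1] using hA i
  · intro hC
    refine ⟨fun j => ?_, fun i => (hC i).1⟩
    rcases fin3 (σ j) with hk | hk | hk <;> rw [hk]
    · rw [PKD_zero]; trivial
    · rw [PKD_one]
      intro i
      have h1 := (hC i).2 j
      rw [hk, MD_one] at h1
      simpa [mem1] using h1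
    · rw [PKD_two]
      constructor
      · intro i
        have h1 := (hC i).2 j
        rw [hk, MD_two] at h1
        by_cases hi : i = (⟨0, hd0⟩ : Fin d)
        · rw [if_pos hi] at h1
          rcases h1 with h1 | h1
          · exact Or.inl h1
          · refine Or.inr ?_
            omega
        · rw [if_neg hi] at h1
          simpa [mem1] using h1
      · have h1 := (hC ⟨0, hd0⟩).2 j
        rw [hk, MD_two, if_pos rfl] at h1
        rcases h1 with h1 | h1
        · exact Or.inl h1
        · exact Or.inr (by omega)

end Aux3

section Aux4
open Finset
variable {q : ℕ} (X : FnField q)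

open Classical in
noncomputable def IND (p : Prop) : ℝ := if p then 1 else 0

lemma IND_pos {p : Prop} (h : p) : IND p = 1 := if_pos h
lemma IND_neg {p : Prop} (h : ¬ p) : IND p = 0 := if_neg h

lemma IND_prod {ι : Type} [Fintype ι] (p : ι → Prop) :
    (∏ j, IND (p j)) = IND (∀ j, p j) := by
  by_cases h : ∀ j, p j
  · rw [IND_pos h]
    exact Finset.prod_eq_one fun j _ => IND_pos (h j)
  · rw [IND_neg h]
    push_neg at h
    obtain ⟨j, hj⟩ := h
    exact Finset.prod_eq_zero (Finset.mem_univ j) (IND_neg hj)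

lemma aux_key (S : Set X.Place) {d t : ℕ} (hd : 2 ≤ d)
    (Q : Fin t → X.Place) (hQinj : Function.Injective Q) (hQS : ∀ j, Q j ∈ S)
    (D : X.Place →₀ ℤ) (hDS : ∀ P ∈ D.support, P ∉ S)
    (hbig : 2 * (X.genus : ℤ) - 1 + 2 * ∑ j, (X.deg (Q j) : ℤ) ≤ X.degDiv D) :
    (Nat.card {h : Fin d → X.F //
        (∀ i, h i ∈ X.Hring S) ∧
        (∀ j : Fin t, ¬ ((∀ i, X.mem1 (Q j) (h i)) ∧
          ¬ X.mem2 (Q j) (h ⟨0, by omega⟩))) ∧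
        (∀ i, h i ∈ X.RR D)} : ℝ)
      = (q : ℝ) ^ (d * X.ell D) *
        ∏ j, (1 - ((q : ℝ) ^ X.deg (Q j) - 1) / (q : ℝ) ^ ((d + 1) * X.deg (Q j))) := by
  classical
  have hd0 : 0 < d := by omega
  have hq2 := X.two_le_q
  have hq0 : (q : ℝ) ≠ 0 := by
    have h2 : (2 : ℝ) ≤ (q : ℝ) := by exact_mod_cast hq2
    linarith
  have hDQ : ∀ j, D (Q j) = 0 := by
    intro j
    by_contra hc
    exact hDS (Q j) (Finsupp.mem_support_iff.mpr hc) (hQS j)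
  have hRRsub : ∀ f : X.F, f ∈ X.RR D → f ∈ X.Hring S := by
    intro f hf P hP
    rcases hf with hf | hf
    · exact Or.inl hf
    · refine Or.inr ?_
      have h1 := hf P
      have h2 : D P = 0 := by
        by_contra hc
        exact hDS P (Finsupp.mem_support_iff.mpr hc) hP
      omega
  haveI hfin1 : Finite {f : X.F // f ∈ X.RR D} := by
    refine Nat.finite_of_card_ne_zero ?_
    have hc : Nat.card {f : X.F // f ∈ X.RR D} = q ^ X.ell D := X.card_RR D
    rw [hc]
    exact pow_ne_zero _ (by omega)
  haveI hfin2 : Finite {h : Fin d → X.F // ∀ i, h i ∈ X.RR D} :=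
    Finite.of_equiv _ (Equiv.subtypePiEquivPi (p := fun _ (f : X.F) => f ∈ X.RR D)).symm
  haveI : Fintype {h : Fin d → X.F // ∀ i, h i ∈ X.RR D} := Fintype.ofFinite _
  have card_to_sum : ∀ p : (Fin d → X.F) → Prop,
      (Nat.card {h : Fin d → X.F // p h ∧ ∀ i, h i ∈ X.RR D} : ℝ)
        = ∑ x : {h : Fin d → X.F // ∀ i, h i ∈ X.RR D}, IND (p x.1) := by
    intro p
    have e : {h : Fin d → X.F // p h ∧ ∀ i, h i ∈ X.RR D}
        ≃ {x : {h : Fin d → X.F // ∀ i, h i ∈ X.RR D} // p x.1} :=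
      (Equiv.subtypeEquivRight fun h => and_comm).trans
        (Equiv.subtypeSubtypeEquivSubtypeInter
          (fun h : Fin d → X.F => ∀ i, h i ∈ X.RR D) p).symm
    rw [Nat.card_congr e, Nat.card_eq_fintype_card, Fintype.card_subtype,
      Finset.card_filter, Nat.cast_sum]
    refine Finset.sum_congr rfl fun x _ => ?_
    by_cases h : p x.1
    · rw [if_pos h, IND_pos h, Nat.cast_one]
    · rw [if_neg h, IND_neg h, Nat.cast_zero]
  -- step 1 : drop the Hring condition
  have e0 : Nat.card {h : Fin d → X.F //
        (∀ i, h i ∈ X.Hring S) ∧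
        (∀ j : Fin t, ¬ ((∀ i, X.mem1 (Q j) (h i)) ∧
          ¬ X.mem2 (Q j) (h ⟨0, by omega⟩))) ∧
        (∀ i, h i ∈ X.RR D)}
      = Nat.card {h : Fin d → X.F //
        (∀ j : Fin t, ¬ ((∀ i, X.mem1 (Q j) (h i)) ∧
          ¬ X.mem2 (Q j) (h ⟨0, hd0⟩))) ∧ (∀ i, h i ∈ X.RR D)} := by
    refine Nat.card_congr (Equiv.subtypeEquivRight ?_)
    intro h
    constructor
    · rintro ⟨_, hb, hc⟩; exact ⟨hb, hc⟩
    · rintro ⟨hb, hc⟩; exact ⟨fun i => hRRsub _ (hc i), hb, hc⟩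
  rw [e0]
  have cts1 : (Nat.card {h : Fin d → X.F //
        (∀ j : Fin t, ¬ ((∀ i, X.mem1 (Q j) (h i)) ∧
          ¬ X.mem2 (Q j) (h ⟨0, hd0⟩))) ∧ (∀ i, h i ∈ X.RR D)} : ℝ)
      = ∑ x : {h : Fin d → X.F // ∀ i, h i ∈ X.RR D},
          IND (∀ j : Fin t, ¬ ((∀ i, X.mem1 (Q j) (x.1 i)) ∧
            ¬ X.mem2 (Q j) (x.1 ⟨0, hd0⟩))) := card_to_sum _
  rw [cts1]
  -- step 2 : expand the indicator as a product over j of sums over Fin 3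
  have hsummand : ∀ x : {h : Fin d → X.F // ∀ i, h i ∈ X.RR D},
      IND (∀ j : Fin t, ¬ ((∀ i, X.mem1 (Q j) (x.1 i)) ∧
          ¬ X.mem2 (Q j) (x.1 ⟨0, hd0⟩)))
        = ∏ j, ∑ k, WD k * IND (PKD X hd0 Q j k x.1) := by
    intro x
    have hj : ∀ j : Fin t,
        (∑ k, WD k * IND (PKD X hd0 Q j k x.1))
          = IND (¬ ((∀ i, X.mem1 (Q j) (x.1 i)) ∧
              ¬ X.mem2 (Q j) (x.1 ⟨0, hd0⟩))) := by
      intro j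
      rw [Fin.sum_univ_three, WD_zero, WD_one, WD_two, PKD_zero, PKD_one, PKD_two]
      by_cases hA : ApD X Q j x.1
      · by_cases hB : X.mem2 (Q j) (x.1 ⟨0, hd0⟩)
        · rw [IND_pos trivial, IND_pos hA, IND_pos (show BpD X hd0 Q j x.1 from ⟨hA, hB⟩),
            IND_pos (show ¬ ((∀ i, X.mem1 (Q j) (x.1 i)) ∧ ¬ X.mem2 (Q j) (x.1 ⟨0, hd0⟩))
              from fun hc => hc.2 hB)]
          norm_num
        · rw [IND_pos trivial, IND_pos hA,
            IND_neg (show ¬ BpD X hd0 Q j x.1 from fun hBp => hB hBp.2),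
            IND_neg (not_not_intro (show (∀ i, X.mem1 (Q j) (x.1 i)) ∧
              ¬ X.mem2 (Q j) (x.1 ⟨0, hd0⟩) from ⟨hA, hB⟩))]
          norm_num
      · rw [IND_pos trivial, IND_neg hA,
          IND_neg (show ¬ BpD X hd0 Q j x.1 from fun hBp => hA hBp.1),
          IND_pos (show ¬ ((∀ i, X.mem1 (Q j) (x.1 i)) ∧ ¬ X.mem2 (Q j) (x.1 ⟨0, hd0⟩))
            from fun hc => hA hc.1)]
        norm_num
    rw [Finset.prod_congr rfl fun j _ => hj j, IND_prod]
  rw [Finset.sum_congr rfl fun x _ => hsummand x]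
  -- step 3 : expand the product of sums
  have hx2 : ∀ x : {h : Fin d → X.F // ∀ i, h i ∈ X.RR D},
      (∏ j, ∑ k, WD k * IND (PKD X hd0 Q j k x.1))
        = ∑ σ : Fin t → Fin 3, ∏ j, WD (σ j) * IND (PKD X hd0 Q j (σ j) x.1) := by
    intro x
    rw [Finset.prod_univ_sum (fun _ => (univ : Finset (Fin 3)))
      (fun j k => WD k * IND (PKD X hd0 Q j k x.1)), Fintype.piFinset_univ]
  rw [Finset.sum_congr rfl fun x _ => hx2 x, Finset.sum_comm]
  -- step 4 : evaluate the inner sum for each σ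
  have hσ : ∀ σ : Fin t → Fin 3,
      (∑ x : {h : Fin d → X.F // ∀ i, h i ∈ X.RR D},
          ∏ j, WD (σ j) * IND (PKD X hd0 Q j (σ j) x.1))
        = (∏ j, WD (σ j)) * ((q : ℝ) ^ (d * X.ell D) *
            ∏ j, (((q : ℝ) ^ X.deg (Q j)) ^ (CD d (σ j)))⁻¹) := by
    intro σ
    have h1 : ∀ x : {h : Fin d → X.F // ∀ i, h i ∈ X.RR D},
        (∏ j, WD (σ j) * IND (PKD X hd0 Q j (σ j) x.1))
          = (∏ j, WD (σ j)) * IND (∀ j, PKD X hd0 Q j (σ j) x.1) := by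
      intro x
      rw [Finset.prod_mul_distrib, IND_prod]
    rw [Finset.sum_congr rfl fun x _ => h1 x, ← Finset.mul_sum]
    congr 1
    have cts2 : (Nat.card {h : Fin d → X.F //
          (∀ j, PKD X hd0 Q j (σ j) h) ∧ ∀ i, h i ∈ X.RR D} : ℝ)
        = ∑ x : {h : Fin d → X.F // ∀ i, h i ∈ X.RR D},
            IND (∀ j, PKD X hd0 Q j (σ j) x.1) := card_to_sum _
    rw [← cts2]
    have e2 : Nat.card {h : Fin d → X.F //
          (∀ j, PKD X hd0 Q j (σ j) h) ∧ ∀ i, h i ∈ X.RR D}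
        = Nat.card {h : Fin d → X.F // ∀ i, (h i ∈ X.RR D ∧
            ∀ j, (h i = 0 ∨ ((MD d hd0 (σ j) i : ℕ) : ℤ) ≤ X.v (Q j) (h i)))} :=
      Nat.card_congr (Equiv.subtypeEquivRight
        (fun h => aux_rect_iff X hd0 Q D hDQ σ h))
    rw [e2]
    have e3 : (Nat.card {h : Fin d → X.F // ∀ i, (h i ∈ X.RR D ∧
          ∀ j, (h i = 0 ∨ ((MD d hd0 (σ j) i : ℕ) : ℤ) ≤ X.v (Q j) (h i)))} : ℝ)
        = (q : ℝ) ^ (d * X.ell D) *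
          ∏ j, (((q : ℝ) ^ X.deg (Q j)) ^ (∑ i, MD d hd0 (σ j) i))⁻¹ :=
      aux_cardRect X Q hQinj D hDQ hbig (fun j i => MD d hd0 (σ j) i)
        (fun j i => MD_le hd0 (σ j) i)
    rw [e3]
    exact congrArg _ (Finset.prod_congr rfl fun j _ => by rw [MD_sum hd0 (σ j)])
  rw [Finset.sum_congr rfl fun σ _ => hσ σ]
  -- step 5 : final algebra
  have h5 : ∀ σ : Fin t → Fin 3,
      (∏ j, WD (σ j)) * ((q : ℝ) ^ (d * X.ell D) *
          ∏ j, (((q : ℝ) ^ X.deg (Q j)) ^ (CD d (σ j)))⁻¹)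
        = (q : ℝ) ^ (d * X.ell D) *
          ∏ j, (WD (σ j) * (((q : ℝ) ^ X.deg (Q j)) ^ (CD d (σ j)))⁻¹) := by
    intro σ
    rw [Finset.prod_mul_distrib]
    ring
  rw [Finset.sum_congr rfl fun σ _ => h5 σ, ← Finset.mul_sum]
  congr 1
  have h6 : (∏ j, ∑ k, WD k * (((q : ℝ) ^ X.deg (Q j)) ^ (CD d k))⁻¹)
      = ∑ σ ∈ Fintype.piFinset (fun _ : Fin t => (univ : Finset (Fin 3))),
          ∏ j, WD (σ j) * (((q : ℝ) ^ X.deg (Q j)) ^ (CD d (σ j)))⁻¹ :=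
    Finset.prod_univ_sum _ _
  rw [Fintype.piFinset_univ] at h6
  rw [← h6]
  refine Finset.prod_congr rfl fun j _ => ?_
  rw [Fin.sum_univ_three, WD_zero, WD_one, WD_two, CD_zero, CD_one, CD_two]
  have ha : ((q : ℝ) ^ X.deg (Q j)) ≠ 0 := pow_ne_zero _ hq0
  have hpow : (q : ℝ) ^ ((d + 1) * X.deg (Q j)) = ((q : ℝ) ^ X.deg (Q j)) ^ (d + 1) := by
    rw [mul_comm, pow_mul]
  rw [hpow]
  have hb : ((q : ℝ) ^ X.deg (Q j)) ^ d ≠ 0 := pow_ne_zero _ ha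
  have hc : ((q : ℝ) ^ X.deg (Q j)) ^ (d + 1) ≠ 0 := pow_ne_zero _ ha
  simp only [pow_zero, inv_one]
  field_simp
  ring

end Aux4


/-- **Density of monic tuples that are not Eisenstein at any of `Q₁, …, Q_t` (Prop. 1).**
Let `F/F_q` be a function field with full constant field `F_q`, `S` a nonempty proper set of
places, `H` its holomorphy ring, `d ≥ 2`, and `Q₁, …, Q_t` distinct places in `S`.  A tuple
`(h₀,…,h_{d-1}) ∈ H^d` (the coefficients of `X^d + h_{d-1}X^{d-1} + ⋯ + h₀`) is Eisenstein
at `Qⱼ` if `hᵢ ∈ Qⱼ` for all `i` and `h₀ ∉ Qⱼ²`.  The Moore–Smith limit, over positive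
divisors `D` supported outside `S`, of `|{not Eisenstein at any Qⱼ} ∩ L(D)^d| / q^{d ℓ(D)}`
equals `∏ⱼ (1 - (q^{deg Qⱼ} - 1)/q^{(d+1) deg Qⱼ})`. -/
theorem density_not_locally_eisenstein_monic
    {q : ℕ} (X : FnField q) (S : Set X.Place)
    (hS : S.Nonempty) (hSne : S ≠ Set.univ)
    (d : ℕ) (hd : 2 ≤ d) (t : ℕ) (Q : Fin t → X.Place)
    (hQinj : Function.Injective Q) (hQS : ∀ j, Q j ∈ S) :
    Filter.Tendsto
      (fun D : X.Divisors S =>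
        ((Nat.card {h : Fin d → X.F //
            (∀ i, h i ∈ X.Hring S) ∧
            (∀ j : Fin t, ¬ ((∀ i, X.mem1 (Q j) (h i)) ∧
              ¬ X.mem2 (Q j) (h ⟨0, by omega⟩))) ∧
            (∀ i, h i ∈ X.RR D.1)}) : ℝ)
          / (q : ℝ) ^ (d * X.ell D.1))
      Filter.atTop
      (nhds (∏ j, (1 - ((q : ℝ) ^ X.deg (Q j) - 1) /
        (q : ℝ) ^ ((d + 1) * X.deg (Q j))))) := by
  classical
  obtain ⟨P₀, hP₀⟩ := (Set.ne_univ_iff_exists_notMem S).mp hSne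
  set N : ℕ := 2 * X.genus + 2 * (∑ j, X.deg (Q j)) with hN
  have hD₀nn : (0 : X.Place →₀ ℤ) ≤ Finsupp.single P₀ (N : ℤ) := by
    rw [Finsupp.le_def]
    intro P
    simp only [Finsupp.coe_zero, Pi.zero_apply]
    rw [Finsupp.single_apply]
    split <;> positivity
  have hD₀S : ∀ P ∈ (Finsupp.single P₀ (N : ℤ)).support, P ∉ S := by
    intro P hP
    have h1 := Finsupp.support_single_subset hP
    rw [Finset.mem_singleton] at h1
    subst h1
    exact hP₀
  set D₀ : X.Divisors S := ⟨Finsupp.single P₀ (N : ℤ), hD₀nn, hD₀S⟩ with hD₀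
  refine Filter.Tendsto.congr' ?_ tendsto_const_nhds
  filter_upwards [Filter.eventually_ge_atTop D₀] with D hD
  have hle : D₀.1 ≤ D.1 := hD
  have hq0 : (q : ℝ) ≠ 0 := by
    have h2 : (2 : ℝ) ≤ (q : ℝ) := by exact_mod_cast X.two_le_q
    linarith
  have hmono : X.degDiv D₀.1 ≤ X.degDiv D.1 := by
    have h1 : (0 : X.Place →₀ ℤ) ≤ D.1 - D₀.1 := sub_nonneg.mpr hle
    have h2 := aux_degDiv_nonneg X _ h1
    have h3 := aux_degDiv_sub X D.1 D₀.1
    linarith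
  have hdeg0 : (N : ℤ) ≤ X.degDiv D₀.1 := by
    rw [show D₀.1 = Finsupp.single P₀ (N : ℤ) from rfl, aux_degDiv_single]
    have h4 : (1 : ℤ) ≤ X.deg P₀ := by exact_mod_cast X.deg_pos P₀
    nlinarith [Int.natCast_nonneg N]
  have hbig : 2 * (X.genus : ℤ) - 1 + 2 * ∑ j, (X.deg (Q j) : ℤ) ≤ X.degDiv D.1 := by
    have h5 : ((N : ℕ) : ℤ) = 2 * (X.genus : ℤ) + 2 * ∑ j, (X.deg (Q j) : ℤ) := by
      rw [hN]; push_cast; ring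
    linarith
  have hkey := aux_key X S hd Q hQinj hQS D.1 D.2.2 hbig
  rw [hkey, mul_div_cancel_left₀ _ (pow_ne_zero _ hq0)]
end

section
/- Let F/F_q be a function field, S ⊊ ℙ_F nonempty, H its holomorphy ring, d ≥ 2, and Q_1, ..., Q_t distinct places in S. The density of the set of tuples (h_0, ..., h_d) ∈ H^{d+1} that are NOT Eisenstein at any of Q_1, ..., Q_t equals ∏_{i=1}^t (1 − (q^{deg(Q_i)} − 1)²/q^{(d+2)deg(Q_i)}). -/
open scoped Classical

namespace FnField

variable {q : ℕ} (X : FnField q)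

/-- membership with multiplicity `n` -/
def memN (n : ℕ) (P : X.Place) (x : X.F) : Prop := x = 0 ∨ (n : ℤ) ≤ X.v P x

lemma memN_mono {m n : ℕ} (h : m ≤ n) {P : X.Place} {x : X.F}
    (hx : X.memN n P x) : X.memN m P x := by
  rcases hx with h0 | hv
  · exact Or.inl h0
  · exact Or.inr (le_trans (by exact_mod_cast h) hv)

lemma mem1_iff_memN {P : X.Place} {x : X.F} : X.mem1 P x ↔ X.memN 1 P x := by
  simp [mem1, memN]

lemma mem2_iff_memN {P : X.Place} {x : X.F} : X.mem2 P x ↔ X.memN 2 P x := by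
  simp [mem2, memN]

lemma degDiv_eq (D : X.Place →₀ ℤ) :
    X.degDiv D = D.sum (fun P n => n * (X.deg P : ℤ)) := rfl

lemma degDiv_nonneg {D : X.Place →₀ ℤ} (hD : 0 ≤ D) : 0 ≤ X.degDiv D := by
  rw [degDiv, Finsupp.sum]
  apply Finset.sum_nonneg
  intro P _
  exact mul_nonneg (Finsupp.le_def.1 hD P) (by positivity)

lemma degDiv_sub (D A : X.Place →₀ ℤ) :
    X.degDiv (D - A) = X.degDiv D - X.degDiv A :=
  Finsupp.sum_sub_index (fun _ b₁ b₂ => sub_mul b₁ b₂ _)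

lemma degDiv_single (P : X.Place) (n : ℤ) :
    X.degDiv (Finsupp.single P n) = n * (X.deg P : ℤ) :=
  Finsupp.sum_single_index (zero_mul _)

lemma degDiv_finsetSum {ι : Type*} (s : Finset ι) (f : ι → X.Place →₀ ℤ) :
    X.degDiv (∑ i ∈ s, f i) = ∑ i ∈ s, X.degDiv (f i) :=
  (Finsupp.sum_finset_sum_index (h := fun P n => n * (X.deg P : ℤ))
    (fun _ => zero_mul _) (fun _ b₁ b₂ => add_mul b₁ b₂ _)).symm

lemma card_RR' (D : X.Place →₀ ℤ) :
    Nat.card {f : X.F // f ∈ X.RR D} = q ^ X.ell D :=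
  X.card_RR D

/-- The central count: functions in `L(D)` with valuation at least `a j` at `Q j`. -/
lemma card_cond {S : Set X.Place} {D : X.Place →₀ ℤ} (hD0 : 0 ≤ D)
    (hDS : ∀ P ∈ D.support, P ∉ S) {t : ℕ} {Q : Fin t → X.Place}
    (hQinj : Function.Injective Q) (hQS : ∀ j, Q j ∈ S)
    (a : Fin t → ℕ) (ha : ∀ j, a j ≤ 2)
    (hbig : 2 * (X.genus : ℤ) - 1 + 2 * ∑ j, (X.deg (Q j) : ℤ) ≤ X.degDiv D) :
    (Nat.card {f : X.F // f ∈ X.RR D ∧ ∀ j, X.memN (a j) (Q j) f} : ℝ) =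
      (q : ℝ) ^ X.ell D * ∏ j, (((q : ℝ) ^ X.deg (Q j))⁻¹) ^ a j := by
  classical
  set A : X.Place →₀ ℤ := ∑ j, Finsupp.single (Q j) ((a j : ℤ)) with hA
  have hDQ : ∀ j, D (Q j) = 0 := by
    intro j
    by_contra h
    exact hDS (Q j) (Finsupp.mem_support_iff.2 h) (hQS j)
  have hAapp : ∀ j, A (Q j) = (a j : ℤ) := by
    intro j
    rw [hA, Finsupp.finset_sum_apply]
    rw [Finset.sum_eq_single j]
    · simp
    · intro b _ hbj
      rw [Finsupp.single_apply, if_neg (fun h => hbj (hQinj h))]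
    · simp
  have hAout : ∀ P : X.Place, (∀ j, Q j ≠ P) → A P = 0 := by
    intro P hP
    rw [hA, Finsupp.finset_sum_apply]
    exact Finset.sum_eq_zero fun j _ => by
      rw [Finsupp.single_apply, if_neg (hP j)]
  have hA0 : ∀ P, 0 ≤ A P := by
    intro P
    rw [hA, Finsupp.finset_sum_apply]
    apply Finset.sum_nonneg
    intro j _
    rw [Finsupp.single_apply]
    split <;> positivity
  have hset : ∀ f : X.F,
      (f ∈ X.RR D ∧ ∀ j, X.memN (a j) (Q j) f) ↔ f ∈ X.RR (D - A) := by
    intro f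
    by_cases hf : f = 0
    · subst hf
      simp [RR, memN]
    constructor
    · rintro ⟨hRR, hm⟩
      refine Or.inr fun P => ?_
      rw [Finsupp.sub_apply]
      by_cases hP : ∃ j, Q j = P
      · obtain ⟨j, rfl⟩ := hP
        rw [hDQ j, hAapp j]
        have := (hm j).resolve_left hf
        simpa using this
      · push_neg at hP
        rw [hAout P hP]
        have hv := hRR.resolve_left hf P
        simpa using hv
    · intro h
      have hv := h.resolve_left hf
      constructor
      · refine Or.inr fun P => ?_
        have := hv P
        rw [Finsupp.sub_apply] at this
        have h0 := hA0 P
        omega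
      · intro j
        refine Or.inr ?_
        have := hv (Q j)
        rw [Finsupp.sub_apply, hDQ j, hAapp j] at this
        omega
  have hcard : Nat.card {f : X.F // f ∈ X.RR D ∧ ∀ j, X.memN (a j) (Q j) f}
      = q ^ X.ell (D - A) := by
    rw [Nat.card_congr (Equiv.subtypeEquivRight hset)]
    exact X.card_RR' (D - A)
  have hdegA : X.degDiv A = ∑ j, (a j : ℤ) * (X.deg (Q j) : ℤ) := by
    rw [hA, degDiv_finsetSum]
    exact Finset.sum_congr rfl fun j _ => X.degDiv_single _ _
  have hAle : X.degDiv A ≤ 2 * ∑ j, (X.deg (Q j) : ℤ) := by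
    rw [hdegA, Finset.mul_sum]
    apply Finset.sum_le_sum
    intro j _
    have : (a j : ℤ) ≤ 2 := by exact_mod_cast ha j
    have hd : (0 : ℤ) ≤ (X.deg (Q j) : ℤ) := by positivity
    nlinarith
  have hA0' : 0 ≤ X.degDiv A := by
    rw [hdegA]
    apply Finset.sum_nonneg
    intro j _
    positivity
  have h2 : 2 * (X.genus : ℤ) - 1 ≤ X.degDiv D := by
    have : 0 ≤ ∑ j, (X.deg (Q j) : ℤ) := by positivity
    linarith
  have h1 : 2 * (X.genus : ℤ) - 1 ≤ X.degDiv (D - A) := by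
    rw [degDiv_sub]
    linarith
  have hr1 := X.riemann D h2
  have hr2 := X.riemann (D - A) h1
  rw [← degDiv_eq] at hr1 hr2
  rw [degDiv_sub] at hr2
  -- the natural-number relation between the dimensions
  have hEllZ : (X.ell D : ℤ) = (X.ell (D - A) : ℤ) + X.degDiv A := by linarith
  have hm : X.degDiv A = ((∑ j, a j * X.deg (Q j) : ℕ) : ℤ) := by
    rw [hdegA]
    push_cast
    rfl
  set m : ℕ := ∑ j, a j * X.deg (Q j) with hmdef
  have hEll : X.ell D = X.ell (D - A) + m := by
    have : (X.ell D : ℤ) = ((X.ell (D - A) + m : ℕ) : ℤ) := by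
      push_cast
      rw [hEllZ, hm]
    exact_mod_cast this
  have hq0 : (q : ℝ) ≠ 0 := by
    have := X.two_le_q
    positivity
  rw [hcard]
  push_cast
  have hprod : ∏ j, (((q : ℝ) ^ X.deg (Q j))⁻¹) ^ a j = ((q : ℝ) ^ m)⁻¹ := by
    rw [hmdef]
    simp only [inv_pow, ← pow_mul, Finset.prod_inv_distrib]
    congr 1
    rw [Finset.prod_pow_eq_pow_sum]
    congr 1
    exact Finset.sum_congr rfl fun j _ => mul_comm _ _
  rw [hprod, hEll, pow_add, mul_assoc, mul_inv_cancel₀ (pow_ne_zero _ hq0), mul_one]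

end FnField

namespace FnField

variable {q : ℕ} (X : FnField q)

/-- the exponent patterns for the inclusion–exclusion expansion -/
def alphaV (d : ℕ) : Fin 5 → Fin (d + 1) → ℕ
  | ⟨0, _⟩, _ => 0
  | ⟨1, _⟩, i => if (i : ℕ) < d then 1 else 0
  | ⟨2, _⟩, i => if (i : ℕ) = 0 then 2 else if (i : ℕ) < d then 1 else 0
  | ⟨3, _⟩, _ => 1
  | ⟨4, _⟩, i => if (i : ℕ) = 0 then 2 else 1

/-- the signs for the inclusion–exclusion expansion -/
def sgn : Fin 5 → ℝ
  | ⟨0, _⟩ => 1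
  | ⟨1, _⟩ => -1
  | ⟨2, _⟩ => 1
  | ⟨3, _⟩ => 1
  | ⟨4, _⟩ => -1

/-- total degrees of the exponent patterns -/
def betaN (d : ℕ) : Fin 5 → ℕ
  | ⟨0, _⟩ => 0
  | ⟨1, _⟩ => d
  | ⟨2, _⟩ => d + 1
  | ⟨3, _⟩ => d + 1
  | ⟨4, _⟩ => d + 2

lemma alphaV_le (d : ℕ) (k : Fin 5) (i : Fin (d + 1)) : alphaV d k i ≤ 2 := by
  match k with
  | ⟨0, _⟩ => simp [alphaV]
  | ⟨1, _⟩ => simp only [alphaV]; split <;> omega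
  | ⟨2, _⟩ => simp only [alphaV]; split <;> [omega; skip]; split <;> omega
  | ⟨3, _⟩ => simp [alphaV]
  | ⟨4, _⟩ => simp only [alphaV]; split <;> omega

lemma sum_ite_lt (d : ℕ) :
    (∑ i : Fin (d + 1), if (i : ℕ) < d then (1 : ℕ) else 0) = d := by
  rw [Fin.sum_univ_castSucc]
  simp [Fin.is_lt]

lemma sum_ite_eq_zero (d : ℕ) :
    (∑ i : Fin (d + 1), if (i : ℕ) = 0 then (1 : ℕ) else 0) = 1 := by
  rw [Fin.sum_univ_succ]
  simp

lemma sum_alphaV (d : ℕ) (hd : 1 ≤ d) (k : Fin 5) :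
    ∑ i : Fin (d + 1), alphaV d k i = betaN d k := by
  match k with
  | ⟨0, _⟩ => simp [alphaV, betaN]
  | ⟨1, _⟩ => simpa [alphaV, betaN] using sum_ite_lt d
  | ⟨2, _⟩ =>
    have h : ∀ i : Fin (d + 1), alphaV d ⟨2, by omega⟩ i =
        (if (i : ℕ) = 0 then 1 else 0) + (if (i : ℕ) < d then 1 else 0) := by
      intro i
      simp only [alphaV]
      by_cases h0 : (i : ℕ) = 0
      · simp [h0, show 0 < d from hd]
      · simp [h0]
    rw [Finset.sum_congr rfl fun i _ => h i, Finset.sum_add_distrib,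
      sum_ite_eq_zero, sum_ite_lt]
    simp [betaN]
    omega
  | ⟨3, _⟩ => simp [alphaV, betaN, Finset.card_univ]
  | ⟨4, _⟩ =>
    have h : ∀ i : Fin (d + 1), alphaV d ⟨4, by omega⟩ i =
        (if (i : ℕ) = 0 then 1 else 0) + 1 := by
      intro i
      simp only [alphaV]
      by_cases h0 : (i : ℕ) = 0 <;> simp [h0]
    rw [Finset.sum_congr rfl fun i _ => h i, Finset.sum_add_distrib,
      sum_ite_eq_zero]
    simp [betaN, Finset.card_univ]
    omega

end FnField

namespace FnField

variable {q : ℕ} (X : FnField q)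

lemma fin5_expand {M : Type*} [AddCommMonoid M] (F : Fin 5 → M) :
    ∑ k : Fin 5, F k = F ⟨0, by omega⟩ + F ⟨1, by omega⟩ + F ⟨2, by omega⟩ +
      F ⟨3, by omega⟩ + F ⟨4, by omega⟩ := by
  rw [Fin.sum_univ_five]
  rfl

lemma ind_expand (A b c p0 : Prop) (hp0 : p0)
    [Decidable A] [Decidable b] [Decidable c] [Decidable p0]
    [Decidable (A ∧ b)] [Decidable (A ∧ c)] [Decidable (A ∧ b ∧ c)]
    [Decidable (¬(A ∧ ¬b ∧ ¬c))] :
    (if ¬(A ∧ ¬b ∧ ¬c) then (1 : ℝ) else 0) =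
      1 * (if p0 then 1 else 0) + -1 * (if A then 1 else 0)
      + 1 * (if A ∧ b then 1 else 0)
      + 1 * (if A ∧ c then 1 else 0) + -1 * (if A ∧ b ∧ c then 1 else 0) := by
  by_cases hA : A <;> by_cases hb : b <;> by_cases hc : c <;>
    simp [hA, hb, hc, hp0]

lemma local_factor {q : ℕ} (hq : 2 ≤ q) (d e : ℕ) :
    ∑ k : Fin 5, sgn k * (((q : ℝ) ^ e)⁻¹) ^ betaN d k
      = 1 - ((q : ℝ) ^ e - 1) ^ 2 / (q : ℝ) ^ ((d + 2) * e) := by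
  have hq0 : (0 : ℝ) < (q : ℝ) ^ e := by
    have : (0:ℝ) < (q:ℝ) := by exact_mod_cast Nat.lt_of_lt_of_le Nat.zero_lt_two hq
    positivity
  rw [fin5_expand]
  rw [show (q : ℝ) ^ ((d + 2) * e) = ((q : ℝ) ^ e) ^ (d + 2) by
    rw [mul_comm, pow_mul]]
  set Qe := (q : ℝ) ^ e with hQe
  have hne : Qe ≠ 0 := ne_of_gt hq0
  simp only [sgn, betaN]
  rw [div_eq_mul_inv, ← inv_pow]
  have h1 : Qe * Qe⁻¹ = 1 := mul_inv_cancel₀ hne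
  linear_combination (Qe⁻¹ ^ d * (Qe * Qe⁻¹ + 1) - 2 * Qe⁻¹ ^ (d + 1)) * h1

lemma key_pointwise {d : ℕ} (hd : 2 ≤ d) {Dv : X.Place →₀ ℤ} {P : X.Place}
    (hDP : Dv P = 0) (f : Fin (d + 1) → X.F) (hf : ∀ i, f i ∈ X.RR Dv) :
    (if ¬ ((∀ i : Fin (d + 1), (i : ℕ) < d → X.mem1 P (f i)) ∧
        ¬ X.mem2 P (f 0) ∧ ¬ X.mem1 P (f ⟨d, Nat.lt_succ_self d⟩)) then (1 : ℝ) else 0)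
      = ∑ k : Fin 5, sgn k *
          ∏ i, (if X.memN (alphaV d k i) P (f i) then (1 : ℝ) else 0) := by
  classical
  have hmem0 : ∀ i, X.memN 0 P (f i) := by
    intro i
    rcases hf i with h0 | hv
    · exact Or.inl h0
    · exact Or.inr (by simpa [hDP] using hv P)
  have hlast : ∀ i : Fin (d + 1), ¬ ((i : ℕ) < d) → i = ⟨d, Nat.lt_succ_self d⟩ := by
    intro i hi
    have := i.isLt
    exact Fin.ext (by simp only [Fin.val_mk]; omega)
  have hd0 : ¬ (((⟨d, Nat.lt_succ_self d⟩ : Fin (d + 1)) : ℕ) = 0) := by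
    simp only [Fin.val_mk]
    omega
  have hiff1 : (∀ i : Fin (d + 1),
      X.memN (if (i : ℕ) < d then 1 else 0) P (f i)) ↔
      (∀ i : Fin (d + 1), (i : ℕ) < d → X.mem1 P (f i)) := by
    constructor
    · intro h i hi
      rw [mem1_iff_memN]
      simpa [hi] using h i
    · intro h i
      by_cases hi : (i : ℕ) < d
      · simpa [hi] using (X.mem1_iff_memN.mp (h i hi))
      · simpa [hi] using hmem0 i
  have hiff2 : (∀ i : Fin (d + 1),
      X.memN (if (i : ℕ) = 0 then 2 else if (i : ℕ) < d then 1 else 0) P (f i))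
      ↔ ((∀ i : Fin (d + 1), (i : ℕ) < d → X.mem1 P (f i)) ∧
          X.memN 2 P (f 0)) := by
    constructor
    · intro h
      refine ⟨fun i hi => ?_, by simpa using h 0⟩
      rw [mem1_iff_memN]
      by_cases h0 : (i : ℕ) = 0
      · exact X.memN_mono (m := 1) (n := 2) (by omega) (by simpa [h0] using h i)
      · simpa [h0, hi] using h i
    · rintro ⟨hA', hb⟩ i
      by_cases h0 : (i : ℕ) = 0
      · have hi0 : i = 0 := Fin.ext (by simpa using h0)
        simpa [h0, hi0] using hb
      · by_cases hi : (i : ℕ) < d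
        · simpa [h0, hi] using X.mem1_iff_memN.mp (hA' i hi)
        · simpa [h0, hi] using hmem0 i
  have hiff3 : (∀ i : Fin (d + 1), X.memN 1 P (f i)) ↔
      ((∀ i : Fin (d + 1), (i : ℕ) < d → X.mem1 P (f i)) ∧
        X.memN 1 P (f ⟨d, Nat.lt_succ_self d⟩)) := by
    constructor
    · intro h
      exact ⟨fun i hi => X.mem1_iff_memN.mpr (h i), h _⟩
    · rintro ⟨hA', hc⟩ i
      by_cases hi : (i : ℕ) < d
      · exact X.mem1_iff_memN.mp (hA' i hi)
      · rw [hlast i hi]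
        exact hc
  have hiff4 : (∀ i : Fin (d + 1),
      X.memN (if (i : ℕ) = 0 then 2 else 1) P (f i)) ↔
      ((∀ i : Fin (d + 1), (i : ℕ) < d → X.mem1 P (f i)) ∧
        (X.memN 2 P (f 0) ∧ X.memN 1 P (f ⟨d, Nat.lt_succ_self d⟩))) := by
    constructor
    · intro h
      refine ⟨fun i hi => ?_, by simpa using h 0, ?_⟩
      · rw [mem1_iff_memN]
        by_cases h0 : (i : ℕ) = 0
        · exact X.memN_mono (m := 1) (n := 2) (by omega) (by simpa [h0] using h i)
        · simpa [h0] using h i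
      · have := h ⟨d, Nat.lt_succ_self d⟩
        simpa [hd0] using this
    · rintro ⟨hA', hb, hc⟩ i
      by_cases h0 : (i : ℕ) = 0
      · have hi0 : i = 0 := Fin.ext (by simpa using h0)
        simpa [h0, hi0] using hb
      · by_cases hi : (i : ℕ) < d
        · simpa [h0] using X.mem1_iff_memN.mp (hA' i hi)
        · rw [hlast i hi]
          simpa [hd0] using hc
  rw [fin5_expand (fun k => sgn k *
    ∏ i, (if X.memN (alphaV d k i) P (f i) then (1 : ℝ) else 0))]
  simp only [sgn, Finset.prod_boole, Finset.mem_univ, true_implies]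
  simp only [alphaV]
  rw [X.mem2_iff_memN, X.mem1_iff_memN]
  simp only [hiff1, hiff2, hiff3, hiff4]
  exact ind_expand _ _ _ _ hmem0

end FnField

namespace FnField

lemma card_pi_subtype {α : Type} (p : α → Prop) {n : ℕ} (C : (Fin n → α) → Prop) :
    Nat.card {h : Fin n → α // (∀ i, p (h i)) ∧ C h}
      = Nat.card {g : Fin n → {x : α // p x} // C (fun i => (g i : α))} := by
  apply Nat.card_congr
  exact { toFun := fun x => ⟨fun i => ⟨x.1 i, x.2.1 i⟩, x.2.2⟩,
          invFun := fun y => ⟨fun i => (y.1 i : α), fun i => (y.1 i).2, y.2⟩,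
          left_inv := fun x => rfl,
          right_inv := fun y => rfl }

variable {q : ℕ} (X : FnField q)

lemma main_count (S : Set X.Place) (d : ℕ) (hd : 2 ≤ d)
    (t : ℕ) (Q : Fin t → X.Place) (hQinj : Function.Injective Q)
    (hQS : ∀ j, Q j ∈ S)
    (Dv : X.Place →₀ ℤ) (hD0 : 0 ≤ Dv) (hDS : ∀ P ∈ Dv.support, P ∉ S)
    (hbig : 2 * (X.genus : ℤ) - 1 + 2 * ∑ j, (X.deg (Q j) : ℤ) ≤ X.degDiv Dv) :
    (Nat.card {h : Fin (d + 1) → X.F //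
        (∀ i, h i ∈ X.Hring S) ∧
        (∀ j : Fin t, ¬ ((∀ i : Fin (d + 1), (i : ℕ) < d → X.mem1 (Q j) (h i)) ∧
          ¬ X.mem2 (Q j) (h 0) ∧
          ¬ X.mem1 (Q j) (h ⟨d, Nat.lt_succ_self d⟩))) ∧
        (∀ i, h i ∈ X.RR Dv)} : ℝ)
      = ((q : ℝ) ^ X.ell Dv) ^ (d + 1) *
        ∏ j, (1 - ((q : ℝ) ^ X.deg (Q j) - 1) ^ 2 /
          (q : ℝ) ^ ((d + 2) * X.deg (Q j))) := by
  classical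
  have hq2 := X.two_le_q
  have hDQ0 : ∀ j, Dv (Q j) = 0 := by
    intro j
    by_contra h
    exact hDS (Q j) (Finsupp.mem_support_iff.2 h) (hQS j)
  have hRRsub : ∀ f : X.F, f ∈ X.RR Dv → f ∈ X.Hring S := by
    intro f hf P hP
    rcases hf with h0 | hv
    · exact Or.inl h0
    · refine Or.inr ?_
      have hDP : Dv P = 0 := by
        by_contra h
        exact hDS P (Finsupp.mem_support_iff.2 h) hP
      simpa [hDP] using hv P
  have hΩfin : Finite {f : X.F // f ∈ X.RR Dv} := by
    refine (Nat.card_ne_zero.mp ?_).2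
    rw [X.card_RR' Dv]
    exact pow_ne_zero _ (by omega)
  letI : Fintype {f : X.F // f ∈ X.RR Dv} := Fintype.ofFinite _
  -- reorder the predicate and push the `RR` condition into the type
  have hpred : ∀ h : Fin (d + 1) → X.F,
      ((∀ i, h i ∈ X.Hring S) ∧
        (∀ j : Fin t, ¬ ((∀ i : Fin (d + 1), (i : ℕ) < d → X.mem1 (Q j) (h i)) ∧
          ¬ X.mem2 (Q j) (h 0) ∧
          ¬ X.mem1 (Q j) (h ⟨d, Nat.lt_succ_self d⟩))) ∧
        (∀ i, h i ∈ X.RR Dv)) ↔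
      ((∀ i, h i ∈ X.RR Dv) ∧
        (∀ j : Fin t, ¬ ((∀ i : Fin (d + 1), (i : ℕ) < d → X.mem1 (Q j) (h i)) ∧
          ¬ X.mem2 (Q j) (h 0) ∧
          ¬ X.mem1 (Q j) (h ⟨d, Nat.lt_succ_self d⟩)))) :=
    fun h => ⟨fun ⟨_, h2, h3⟩ => ⟨h3, h2⟩,
      fun ⟨h3, h2⟩ => ⟨fun i => hRRsub _ (h3 i), h2, h3⟩⟩
  rw [Nat.card_congr (Equiv.subtypeEquivRight hpred), card_pi_subtype]
  -- the inner-count evaluation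
  have inner_eval : ∀ (a : Fin t → ℕ), (∀ j, a j ≤ 2) →
      (∑ f : {f : X.F // f ∈ X.RR Dv}, ∏ j,
        (if X.memN (a j) (Q j) (f : X.F) then (1 : ℝ) else 0))
      = (q : ℝ) ^ X.ell Dv * ∏ j, (((q : ℝ) ^ X.deg (Q j))⁻¹) ^ a j := by
    intro a ha
    have h1 : ∀ f : {f : X.F // f ∈ X.RR Dv},
        (∏ j, (if X.memN (a j) (Q j) (f : X.F) then (1 : ℝ) else 0))
          = if (∀ j, X.memN (a j) (Q j) (f : X.F)) then 1 else 0 := by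
      intro f
      rw [Finset.prod_boole]
      simp
    rw [Finset.sum_congr rfl fun f _ => h1 f, Finset.sum_boole,
      ← Fintype.card_subtype, ← Nat.card_eq_fintype_card,
      Nat.card_congr (Equiv.subtypeSubtypeEquivSubtypeInter
        (fun f : X.F => f ∈ X.RR Dv) (fun f => ∀ j, X.memN (a j) (Q j) f))]
    exact_mod_cast X.card_cond hD0 hDS hQinj hQS a ha hbig
  calc (Nat.card {g : Fin (d + 1) → {f : X.F // f ∈ X.RR Dv} //
        ∀ j : Fin t, ¬ ((∀ i : Fin (d + 1), (i : ℕ) < d → X.mem1 (Q j) ((g i : X.F))) ∧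
          ¬ X.mem2 (Q j) ((g 0 : X.F)) ∧
          ¬ X.mem1 (Q j) ((g ⟨d, Nat.lt_succ_self d⟩ : X.F)))} : ℝ)
      = ∑ g : Fin (d + 1) → {f : X.F // f ∈ X.RR Dv},
          if (∀ j : Fin t, ¬ ((∀ i : Fin (d + 1), (i : ℕ) < d → X.mem1 (Q j) ((g i : X.F))) ∧
            ¬ X.mem2 (Q j) ((g 0 : X.F)) ∧
            ¬ X.mem1 (Q j) ((g ⟨d, Nat.lt_succ_self d⟩ : X.F)))) then (1 : ℝ) else 0 := by
        rw [Nat.card_eq_fintype_card, Fintype.card_subtype, Finset.sum_boole]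
    _ = ∑ g : Fin (d + 1) → {f : X.F // f ∈ X.RR Dv},
          ∏ j : Fin t, if ¬ ((∀ i : Fin (d + 1), (i : ℕ) < d → X.mem1 (Q j) ((g i : X.F))) ∧
            ¬ X.mem2 (Q j) ((g 0 : X.F)) ∧
            ¬ X.mem1 (Q j) ((g ⟨d, Nat.lt_succ_self d⟩ : X.F))) then (1 : ℝ) else 0 := by
        refine Finset.sum_congr rfl fun g _ => ?_
        rw [Finset.prod_boole]
        simp
    _ = ∑ g : Fin (d + 1) → {f : X.F // f ∈ X.RR Dv},
          ∏ j : Fin t, ∑ k : Fin 5, sgn k *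
            ∏ i, (if X.memN (alphaV d k i) (Q j) ((g i : X.F)) then (1 : ℝ) else 0) := by
        refine Finset.sum_congr rfl fun g _ => Finset.prod_congr rfl fun j _ => ?_
        exact X.key_pointwise hd (hDQ0 j) (fun i => (g i : X.F)) (fun i => (g i).2)
    _ = ∑ g : Fin (d + 1) → {f : X.F // f ∈ X.RR Dv}, ∑ w : Fin t → Fin 5,
          ∏ j : Fin t, (sgn (w j) *
            ∏ i, (if X.memN (alphaV d (w j) i) (Q j) ((g i : X.F)) then (1 : ℝ) else 0)) := by
        refine Finset.sum_congr rfl fun g _ => ?_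
        rw [Finset.prod_univ_sum, Fintype.piFinset_univ]
    _ = ∑ w : Fin t → Fin 5, ∑ g : Fin (d + 1) → {f : X.F // f ∈ X.RR Dv},
          ∏ j : Fin t, (sgn (w j) *
            ∏ i, (if X.memN (alphaV d (w j) i) (Q j) ((g i : X.F)) then (1 : ℝ) else 0)) :=
        Finset.sum_comm
    _ = ∑ w : Fin t → Fin 5, (∏ j, sgn (w j)) *
          ∑ g : Fin (d + 1) → {f : X.F // f ∈ X.RR Dv},
          ∏ i, ∏ j : Fin t,
            (if X.memN (alphaV d (w j) i) (Q j) ((g i : X.F)) then (1 : ℝ) else 0) := by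
        refine Finset.sum_congr rfl fun w _ => ?_
        rw [Finset.mul_sum]
        refine Finset.sum_congr rfl fun g _ => ?_
        rw [Finset.prod_mul_distrib, Finset.prod_comm]
    _ = ∑ w : Fin t → Fin 5, (∏ j, sgn (w j)) *
          ∏ i : Fin (d + 1), ∑ f : {f : X.F // f ∈ X.RR Dv}, ∏ j : Fin t,
            (if X.memN (alphaV d (w j) i) (Q j) ((f : X.F)) then (1 : ℝ) else 0) := by
        refine Finset.sum_congr rfl fun w _ => ?_
        congr 1
        rw [Finset.prod_univ_sum, Fintype.piFinset_univ]
    _ = ∑ w : Fin t → Fin 5, (∏ j, sgn (w j)) *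
          ∏ i : Fin (d + 1), ((q : ℝ) ^ X.ell Dv *
            ∏ j, (((q : ℝ) ^ X.deg (Q j))⁻¹) ^ alphaV d (w j) i) := by
        refine Finset.sum_congr rfl fun w _ => ?_
        congr 1
        exact Finset.prod_congr rfl fun i _ =>
          inner_eval (fun j => alphaV d (w j) i) (fun j => alphaV_le d (w j) i)
    _ = ∑ w : Fin t → Fin 5, ((q : ℝ) ^ X.ell Dv) ^ (d + 1) *
          ∏ j, (sgn (w j) * (((q : ℝ) ^ X.deg (Q j))⁻¹) ^ betaN d (w j)) := by
        refine Finset.sum_congr rfl fun w _ => ?_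
        rw [Finset.prod_mul_distrib, Finset.prod_const, Finset.card_univ,
          Fintype.card_fin, Finset.prod_comm]
        have hrw : ∀ j : Fin t, (∏ i : Fin (d + 1),
            (((q : ℝ) ^ X.deg (Q j))⁻¹) ^ alphaV d (w j) i)
            = (((q : ℝ) ^ X.deg (Q j))⁻¹) ^ betaN d (w j) := by
          intro j
          rw [Finset.prod_pow_eq_pow_sum, sum_alphaV d (by omega) (w j)]
        rw [Finset.prod_congr rfl fun j _ => hrw j, Finset.prod_mul_distrib]
        ring
    _ = ((q : ℝ) ^ X.ell Dv) ^ (d + 1) *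
          ∑ w : Fin t → Fin 5,
          ∏ j, (sgn (w j) * (((q : ℝ) ^ X.deg (Q j))⁻¹) ^ betaN d (w j)) := by
        rw [Finset.mul_sum]
    _ = ((q : ℝ) ^ X.ell Dv) ^ (d + 1) *
          ∏ j, ∑ k : Fin 5, sgn k * (((q : ℝ) ^ X.deg (Q j))⁻¹) ^ betaN d k := by
        congr 1
        rw [Finset.prod_univ_sum, Fintype.piFinset_univ]
    _ = ((q : ℝ) ^ X.ell Dv) ^ (d + 1) *
          ∏ j, (1 - ((q : ℝ) ^ X.deg (Q j) - 1) ^ 2 /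
            (q : ℝ) ^ ((d + 2) * X.deg (Q j))) := by
        congr 1
        exact Finset.prod_congr rfl fun j _ => local_factor hq2 d (X.deg (Q j))

end FnField
open FnField Filter

/-- **Density of non-monic tuples not Eisenstein at any of `Q₁, …, Q_t` (Prop. 2).**
Let `F/F_q` be a function field, `S` a nonempty proper set of places, `H` its holomorphy
ring, `d ≥ 2`, and `Q₁, …, Q_t` distinct places in `S`.  A tuple `(h₀,…,h_d) ∈ H^{d+1}` is
Eisenstein at `Qⱼ` if `hᵢ ∈ Qⱼ` for `i < d`, `h₀ ∉ Qⱼ²` and `h_d ∉ Qⱼ`.  The Moore–Smith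
limit over positive divisors `D` supported outside `S` of
`|{not Eisenstein at any Qⱼ} ∩ L(D)^{d+1}| / q^{(d+1) ℓ(D)}` equals
`∏ⱼ (1 - (q^{deg Qⱼ} - 1)²/q^{(d+2) deg Qⱼ})`. -/
theorem density_not_locally_eisenstein
    {q : ℕ} (X : FnField q) (S : Set X.Place)
    (hS : S.Nonempty) (hSne : S ≠ Set.univ)
    (d : ℕ) (hd : 2 ≤ d) (t : ℕ) (Q : Fin t → X.Place)
    (hQinj : Function.Injective Q) (hQS : ∀ j, Q j ∈ S) :
    Filter.Tendsto
      (fun D : X.Divisors S =>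
        ((Nat.card {h : Fin (d + 1) → X.F //
            (∀ i, h i ∈ X.Hring S) ∧
            (∀ j : Fin t, ¬ ((∀ i : Fin (d + 1), (i : ℕ) < d → X.mem1 (Q j) (h i)) ∧
              ¬ X.mem2 (Q j) (h 0) ∧
              ¬ X.mem1 (Q j) (h ⟨d, Nat.lt_succ_self d⟩))) ∧
            (∀ i, h i ∈ X.RR D.1)}) : ℝ)
          / (q : ℝ) ^ ((d + 1) * X.ell D.1))
      Filter.atTop
      (nhds (∏ j, (1 - ((q : ℝ) ^ X.deg (Q j) - 1) ^ 2 /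
        (q : ℝ) ^ ((d + 2) * X.deg (Q j))))) := by
  classical
  have hq2 := X.two_le_q
  have hq0 : (0 : ℝ) < (q : ℝ) := by exact_mod_cast Nat.lt_of_lt_of_le Nat.zero_lt_two hq2
  obtain ⟨P₀, hP₀⟩ := (Set.ne_univ_iff_exists_notMem S).mp hSne
  set M : ℕ := 2 * X.genus + 2 * ∑ j, X.deg (Q j) with hM
  have hD₀1 : (0 : X.Place →₀ ℤ) ≤ Finsupp.single P₀ (M : ℤ) :=
    Finsupp.single_nonneg.mpr (by positivity)
  have hD₀2 : ∀ P ∈ (Finsupp.single P₀ (M : ℤ)).support, P ∉ S := by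
    intro P hP
    have h := Finsupp.support_single_subset hP
    simp only [Finset.mem_singleton] at h
    subst h
    exact hP₀
  set D₀ : X.Divisors S := ⟨Finsupp.single P₀ (M : ℤ), hD₀1, hD₀2⟩ with hD₀
  apply Filter.Tendsto.congr' ?_ tendsto_const_nhds
  filter_upwards [Filter.eventually_ge_atTop D₀] with D hD
  have hDle : D₀.1 ≤ D.1 := hD
  have hbig : 2 * (X.genus : ℤ) - 1 + 2 * ∑ j, (X.deg (Q j) : ℤ) ≤ X.degDiv D.1 := by
    have h1 : X.degDiv D.1 = X.degDiv D₀.1 + X.degDiv (D.1 - D₀.1) := by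
      rw [X.degDiv_sub]; ring
    have h2 : 0 ≤ X.degDiv (D.1 - D₀.1) := X.degDiv_nonneg (sub_nonneg.mpr hDle)
    have h3 : X.degDiv D₀.1 = (M : ℤ) * X.deg P₀ := X.degDiv_single _ _
    have h4 : (1 : ℤ) ≤ (X.deg P₀ : ℤ) := by exact_mod_cast X.deg_pos P₀
    have h5 : ((M : ℤ)) = 2 * (X.genus : ℤ) + 2 * ∑ j, (X.deg (Q j) : ℤ) := by
      rw [hM]; push_cast; ring
    have h7 : (0 : ℤ) ≤ (M : ℤ) := by positivity
    have h6 : (M : ℤ) * 1 ≤ (M : ℤ) * X.deg P₀ := mul_le_mul_of_nonneg_left h4 h7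
    linarith
  rw [X.main_count S d hd t Q hQinj hQS D.1 D.2.1 D.2.2 hbig]
  rw [show (q : ℝ) ^ ((d + 1) * X.ell D.1) = ((q : ℝ) ^ X.ell D.1) ^ (d + 1) by
    rw [mul_comm, pow_mul]]
  have hK : ((q : ℝ) ^ X.ell D.1) ^ (d + 1) ≠ 0 := by positivity
  exact (mul_div_cancel_left₀ _ hK).symm
end
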